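/- arXiv:1511.05727 — 3 statements merged into one kernel-verified Lean document; each statement's English description precedes it below -/
import Mathlib

section
/- There exists a constant η₀ ∈ (0, a₊ − a₀) such that for every η ∈ (0, η₀) and every κ > 0 there is a constant C > 0 (depending only on κ and f) with the following property: for all sufficiently small ε > 0 and every ξ ∈ [a₊ − η, a₊ − ε^κ], one has Y(C·|log ε|, ξ) ≥ a₊ − ε^κ. -/
lemma barrier_lemma (Yg B F B' : ℝ → ℝ)
    (hY : ∀ τ ≥ (0:ℝ), HasDerivAt Yg (F (Yg τ)) τ)
    (hB : ∀ τ : ℝ, HasDerivAt B (B' τ) τ)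
    (h0 : B 0 < Yg 0)
    (hcross : ∀ τ ≥ (0:ℝ), Yg τ = B τ → B' τ < F (Yg τ)) :
    ∀ τ ≥ (0:ℝ), B τ < Yg τ := by
  by_contra h
  push_neg at h
  obtain ⟨τ₁, hτ₁, hle⟩ := h
  set D : ℝ → ℝ := fun τ => Yg τ - B τ with hD
  set A : Set ℝ := {τ | 0 ≤ τ ∧ D τ ≤ 0} with hA
  have hAne : A.Nonempty := ⟨τ₁, hτ₁, by simp [hD]; linarith⟩
  have hAbdd : BddBelow A := ⟨0, fun x hx => hx.1⟩
  set t := sInf A with htdef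
  have ht0 : 0 ≤ t := le_csInf hAne fun x hx => hx.1
  have hcont : ∀ s, 0 ≤ s → ContinuousAt D s := fun s hs =>
    ((hY s hs).continuousAt.sub (hB s).continuousAt)
  have hDt_le : D t ≤ 0 := by
    by_contra hpos
    push_neg at hpos
    have hnb : D ⁻¹' Set.Ioi 0 ∈ nhds t :=
      (hcont t ht0).preimage_mem_nhds (Ioi_mem_nhds hpos)
    obtain ⟨δ, hδ, hball⟩ := Metric.mem_nhds_iff.mp hnb
    obtain ⟨a, haA, halt⟩ := (csInf_lt_iff hAbdd hAne).mp
      (show sInf A < t + δ by linarith)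
    have hta : t ≤ a := csInf_le hAbdd haA
    have : a ∈ Metric.ball t δ := by
      rw [Metric.mem_ball, Real.dist_eq, abs_lt]; constructor <;> linarith
    have := hball this
    exact absurd haA.2 (by simpa using not_le.mpr this)
  have hpre : ∀ s, 0 ≤ s → s < t → 0 < D s := by
    intro s hs hst
    by_contra hns
    push_neg at hns
    exact absurd (csInf_le hAbdd ⟨hs, hns⟩) (not_le.mpr hst)
  have htpos : 0 < t := by
    rcases ht0.lt_or_eq with h | h
    · exact h
    · exfalso; rw [← h] at hDt_le; simp [hD] at hDt_le; linarith
  have hDt_ge : 0 ≤ D t := by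
    have htend : Filter.Tendsto D (nhdsWithin t (Set.Iio t)) (nhds (D t)) :=
      ((hcont t ht0).continuousWithinAt).tendsto
    refine ge_of_tendsto htend ?_
    have : Set.Ioo 0 t ∈ nhdsWithin t (Set.Iio t) := Ioo_mem_nhdsLT_of_mem ⟨htpos, le_refl t⟩
    filter_upwards [this] with s hs
    exact (hpre s hs.1.le hs.2).le
  have hDt : D t = 0 := le_antisymm hDt_le hDt_ge
  have hYB : Yg t = B t := by have := hDt; simp [hD] at this; linarith
  have hd : HasDerivAt D (F (Yg t) - B' t) t := (hY t ht0).sub (hB t)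
  have hdpos : 0 < F (Yg t) - B' t := sub_pos.mpr (hcross t ht0 hYB)
  rw [hasDerivAt_iff_tendsto_slope] at hd
  have hev : ∀ᶠ y in nhdsWithin t {t}ᶜ, 0 < slope D t y :=
    hd.eventually (eventually_gt_nhds hdpos)
  have hev' : ∀ᶠ y in nhdsWithin t (Set.Iio t), 0 < slope D t y :=
    hev.filter_mono (nhdsWithin_mono t fun y hy => ne_of_lt hy)
  have hev2 : Set.Ioo 0 t ∈ nhdsWithin t (Set.Iio t) := Ioo_mem_nhdsLT_of_mem ⟨htpos, le_refl t⟩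
  obtain ⟨y, hy1, hy2⟩ := (hev'.and (Filter.eventually_of_mem hev2 fun y hy => hy)).exists
  have hslope : slope D t y = D y / (y - t) := by
    rw [slope_def_field, hDt]; ring
  rw [hslope] at hy1
  have hyt : y - t < 0 := by linarith [hy2.2]
  have : D y < 0 := by
    rcases div_pos_iff.mp hy1 with ⟨h1', h2'⟩ | ⟨h1', h2'⟩
    · linarith
    · linarith
  linarith [hpre y hy2.1.le hy2.2]

set_option maxHeartbeats 1000000

/-- Lemma 3.2: solutions of the ODE `dY/dτ = f(Y)` started in `[a₊ - η, a₊ - ε^κ]`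
reach `a₊ - ε^κ` within time `C |log ε|`. -/
theorem stmt_1
    (f : ℝ → ℝ) (hf : ContDiff ℝ 2 f)
    (p μ c C q : ℝ) (hp : 0 < p) (hμ : 0 < μ) (hc : 0 < c) (hCpos : 0 < C) (hq : 0 < q)
    (am a0 ap : ℝ) (h1 : am < a0) (h2 : a0 < ap)
    (hzeros : ∀ u, f u = 0 ↔ u = am ∨ u = a0 ∨ u = ap)
    (hfam : deriv f am = -p) (hfap : deriv f ap = -p) (hfa0 : deriv f a0 = μ)
    (hgrowth : ∀ u : ℝ, f u ≤ C * (1 + |u| ^ q))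
    (hfc : ∀ u, deriv f u ≤ c)
    (hsupp : ∀ u, ap ≤ u → f u ≤ -p * (u - ap))
    (hsubb : ∀ u, u ≤ am → -p * (u - am) ≤ f u)
    (C₀ : ℝ) (hC₀ : 1 < C₀) (hIcc : Set.Icc am ap ⊆ Set.Icc (-(2 * C₀)) (2 * C₀))
    (Y : ℝ → ℝ → ℝ)
    (hY0 : ∀ ξ ∈ Set.Icc (-(2 * C₀)) (2 * C₀), Y 0 ξ = ξ)
    (hYode : ∀ ξ ∈ Set.Icc (-(2 * C₀)) (2 * C₀), ∀ τ ≥ (0 : ℝ),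
      HasDerivAt (fun s => Y s ξ) (f (Y τ ξ)) τ) :
    ∃ η₀ ∈ Set.Ioo 0 (ap - a0), ∀ η ∈ Set.Ioo 0 η₀, ∀ κ > (0 : ℝ),
      ∃ C' > (0 : ℝ), ∃ ε₀ > (0 : ℝ), ∀ ε ∈ Set.Ioo (0 : ℝ) ε₀,
        ∀ ξ ∈ Set.Icc (ap - η) (ap - ε ^ κ), ap - ε ^ κ ≤ Y (C' * |Real.log ε|) ξ := by
  have hfcont : Continuous f := hf.continuous
  have hfdiff : Differentiable ℝ f := hf.differentiable (by norm_num)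
  have hfap0 : f ap = 0 := (hzeros ap).mpr (Or.inr (Or.inr rfl))
  have hd : HasDerivAt f (-p) ap := by
    have := (hfdiff ap).hasDerivAt; rwa [hfap] at this
  rw [hasDerivAt_iff_tendsto_slope] at hd
  -- a point in (a0, ap) where f is positive
  have hu1 : ∃ u1 ∈ Set.Ioo a0 ap, 0 < f u1 := by
    have hev : ∀ᶠ y in nhdsWithin ap {ap}ᶜ, slope f ap y < 0 :=
      hd.eventually (eventually_lt_nhds (by linarith))
    have hev' : ∀ᶠ y in nhdsWithin ap (Set.Iio ap), slope f ap y < 0 :=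
      hev.filter_mono (nhdsWithin_mono ap fun y hy => ne_of_lt hy)
    have hev2 : Set.Ioo a0 ap ∈ nhdsWithin ap (Set.Iio ap) :=
      Ioo_mem_nhdsLT_of_mem ⟨h2, le_refl ap⟩
    obtain ⟨y, hy1, hy2⟩ := (hev'.and (Filter.eventually_of_mem hev2 fun y hy => hy)).exists
    refine ⟨y, hy2, ?_⟩
    rw [slope_def_field, hfap0, sub_zero] at hy1
    have hyap : y - ap < 0 := by linarith [hy2.2]
    rcases div_neg_iff.mp hy1 with ⟨ha, hb⟩ | ⟨ha, hb⟩
    · linarith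
    · linarith
  -- f > 0 on (a0, ap)
  have hfpos : ∀ u ∈ Set.Ioo a0 ap, 0 < f u := by
    obtain ⟨u1, hu1m, hu1p⟩ := hu1
    intro u hu
    rcases lt_trichotomy (f u) 0 with hneg | hzero | hpos
    · exfalso
      rcases lt_trichotomy u u1 with hlt | heq | hgt
      · obtain ⟨cz, hcz, hfcz⟩ := intermediate_value_Icc hlt.le hfcont.continuousOn
          (Set.mem_Icc.mpr ⟨hneg.le, hu1p.le⟩)
        have hcI : cz ∈ Set.Ioo a0 ap := ⟨lt_of_lt_of_le hu.1 hcz.1, lt_of_le_of_lt hcz.2 hu1m.2⟩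
        rcases (hzeros cz).mp hfcz with rfl | rfl | rfl
        · exact absurd hcI.1 (by linarith)
        · exact lt_irrefl _ hcI.1
        · exact lt_irrefl _ hcI.2
      · rw [heq] at hneg; linarith
      · obtain ⟨cz, hcz, hfcz⟩ := intermediate_value_Icc' hgt.le hfcont.continuousOn
          (Set.mem_Icc.mpr ⟨hneg.le, hu1p.le⟩)
        have hcI : cz ∈ Set.Ioo a0 ap := ⟨lt_of_lt_of_le hu1m.1 hcz.1, lt_of_le_of_lt hcz.2 hu.2⟩
        rcases (hzeros cz).mp hfcz with rfl | rfl | rfl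
        · exact absurd hcI.1 (by linarith)
        · exact lt_irrefl _ hcI.1
        · exact lt_irrefl _ hcI.2
    · exfalso
      rcases (hzeros u).mp hzero with rfl | rfl | rfl
      · exact absurd hu.1 (by linarith)
      · exact lt_irrefl _ hu.1
      · exact lt_irrefl _ hu.2
    · exact hpos
  -- choose η₀
  obtain ⟨η₀, hη₀pos, hη₀lt, hη₀le1⟩ :
      ∃ η₀ : ℝ, 0 < η₀ ∧ η₀ < ap - a0 ∧ η₀ ≤ 1 := by
    refine ⟨min ((ap - a0)/2) (1/2), lt_min (by linarith) (by norm_num),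
      lt_of_le_of_lt (min_le_left _ _) (by linarith),
      le_trans (min_le_right _ _) (by norm_num)⟩
  have hη₀a0 : a0 < ap - η₀ := by linarith
  -- linear lower bound near ap
  have hnear : ∃ b < ap, ap - η₀ ≤ b ∧ ∀ u ∈ Set.Ioo b ap, p/2 * (ap - u) ≤ f u := by
    have hev : ∀ᶠ y in nhdsWithin ap {ap}ᶜ, slope f ap y < -(p/2) :=
      hd.eventually (eventually_lt_nhds (by linarith))
    have hev' : {y | slope f ap y < -(p/2)} ∈ nhdsWithin ap (Set.Iio ap) :=
      hev.filter_mono (nhdsWithin_mono ap fun y hy => ne_of_lt hy)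
    obtain ⟨l, hl, hsub⟩ := mem_nhdsLT_iff_exists_Ioo_subset.mp hev'
    refine ⟨max l (ap - η₀), max_lt hl (by linarith), le_max_right _ _, ?_⟩
    intro u hu
    have hu' : u ∈ Set.Ioo l ap := ⟨lt_of_le_of_lt (le_max_left l _) hu.1, hu.2⟩
    have hs0 : slope f ap u < -(p/2) := hsub hu'
    have hs : (f u - f ap) / (u - ap) < -(p/2) := by rwa [slope_def_field] at hs0
    rw [hfap0, sub_zero] at hs
    have huap : u - ap < 0 := by linarith [hu.2]
    have := (div_lt_iff_of_neg huap).mp hs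
    linarith
  obtain ⟨b, hbap, hbge, hbnear⟩ := hnear
  have hKne : (Set.Icc (ap - η₀) b).Nonempty := ⟨ap - η₀, le_refl _, hbge⟩
  obtain ⟨u0, hu0K, hu0min⟩ := (isCompact_Icc).exists_isMinOn hKne hfcont.continuousOn
  have hu0K' := Set.mem_Icc.mp hu0K
  have hm1pos : 0 < f u0 := hfpos u0 ⟨lt_of_lt_of_le hη₀a0 hu0K'.1, lt_of_le_of_lt hu0K'.2 hbap⟩
  obtain ⟨m, hmpos, hmbound⟩ :
      ∃ m : ℝ, 0 < m ∧ ∀ u ∈ Set.Icc (ap - η₀) ap, m * (ap - u) ≤ f u := by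
    refine ⟨min (p/2) (f u0 / η₀), lt_min (by linarith) (div_pos hm1pos hη₀pos), ?_⟩
    set m : ℝ := min (p/2) (f u0 / η₀) with hmdef
    intro u hu
    have hu' := Set.mem_Icc.mp hu
    rcases le_or_gt u b with hub | hub
    · have hfu : f u0 ≤ f u := isMinOn_iff.mp hu0min u (Set.mem_Icc.mpr ⟨hu'.1, hub⟩)
      have hle1 : ap - u ≤ η₀ := by linarith [hu'.1]
      have h2' : m * (ap - u) ≤ (f u0 / η₀) * η₀ := by
        calc m * (ap - u) ≤ (f u0/η₀) * (ap - u) :=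
              mul_le_mul_of_nonneg_right (min_le_right _ _) (by linarith [hu'.2])
          _ ≤ (f u0/η₀) * η₀ :=
              mul_le_mul_of_nonneg_left hle1 (le_of_lt (div_pos hm1pos hη₀pos))
      rw [div_mul_cancel₀ _ (ne_of_gt hη₀pos)] at h2'
      linarith
    · rcases hu'.2.lt_or_eq with hlt | heq
      · have hnb := hbnear u ⟨hub, hlt⟩
        have : m * (ap - u) ≤ p/2 * (ap - u) :=
          mul_le_mul_of_nonneg_right (min_le_left _ _) (by linarith)
        linarith
      · rw [heq]; simp [hfap0]
  clear hu1 hd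
  -- main construction
  refine ⟨η₀, ⟨hη₀pos, hη₀lt⟩, ?_⟩
  intro η hη κ hκ
  refine ⟨2*κ/m, div_pos (by linarith) hmpos, 1, one_pos, ?_⟩
  intro ε hε ξ hξ
  have hεκ : 0 < ε ^ κ := Real.rpow_pos_of_pos hε.1 κ
  have hξ' := hξ
  have hξap : ξ < ap := lt_of_le_of_lt hξ.2 (by linarith)
  have hξlb : ap - η₀ < ξ := by
    have : ap - η₀ < ap - η := by linarith [hη.2]
    linarith [hξ.1]
  have hξam : am ≤ ξ := by linarith
  have hξbox : ξ ∈ Set.Icc (-(2*C₀)) (2*C₀) := hIcc ⟨hξam, hξap.le⟩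
  have hBderiv : ∀ τ : ℝ, HasDerivAt (fun τ => ap - η₀ * Real.exp (-(m/2) * τ))
      (η₀ * (m/2) * Real.exp (-(m/2)*τ)) τ := by
    intro τ
    have hb1 : HasDerivAt (fun τ : ℝ => -(m/2) * τ) (-(m/2)) τ := by
      simpa using (hasDerivAt_id τ).const_mul (-(m/2))
    have hb3 := ((hb1.exp).const_mul η₀).const_sub ap
    rw [show η₀ * (m/2) * Real.exp (-(m/2)*τ) = -(η₀ * (Real.exp (-(m/2) * τ) * -(m/2))) by ring]
    exact hb3
  have hbar : ∀ τ ≥ (0:ℝ), ap - η₀ * Real.exp (-(m/2) * τ) < Y τ ξ := by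
    refine barrier_lemma (fun s => Y s ξ) (fun τ => ap - η₀ * Real.exp (-(m/2) * τ)) f
      (fun τ => η₀ * (m/2) * Real.exp (-(m/2)*τ)) (hYode ξ hξbox) hBderiv ?_ ?_
    · show ap - η₀ * Real.exp (-(m/2) * 0) < Y 0 ξ
      rw [hY0 ξ hξbox, mul_zero, Real.exp_zero, mul_one]
      linarith
    · intro τ hτ hYB
      have hYB' : Y τ ξ = ap - η₀ * Real.exp (-(m/2) * τ) := hYB
      have hepos : 0 < Real.exp (-(m/2)*τ) := Real.exp_pos _
      have hele : Real.exp (-(m/2)*τ) ≤ 1 := by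
        apply Real.exp_le_one_iff.mpr
        nlinarith
      have hmem : Y τ ξ ∈ Set.Icc (ap - η₀) ap := by
        rw [hYB']
        constructor
        · nlinarith
        · nlinarith
      have hmb := hmbound _ hmem
      have h5 : ap - Y τ ξ = η₀ * Real.exp (-(m/2)*τ) := by rw [hYB']; ring
      rw [h5] at hmb
      show η₀ * (m/2) * Real.exp (-(m/2)*τ) < f (Y τ ξ)
      nlinarith [mul_pos hη₀pos hepos]
  have hlog : Real.log ε < 0 := Real.log_neg hε.1 hε.2
  have habs : |Real.log ε| = -Real.log ε := abs_of_neg hlog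
  have hT0 : (0:ℝ) ≤ 2*κ/m * |Real.log ε| :=
    mul_nonneg (div_pos (by linarith) hmpos).le (abs_nonneg _)
  have hfin := hbar (2*κ/m * |Real.log ε|) hT0
  have harg : -(m/2) * (2*κ/m * |Real.log ε|) = Real.log ε * κ := by
    have hm' : m ≠ 0 := ne_of_gt hmpos
    have h9 : -(m/2) * (2*κ/m * |Real.log ε|) = (m/m) * (Real.log ε * κ) := by
      rw [habs]; ring
    rw [h9, div_self hm', one_mul]
  rw [harg, ← Real.rpow_def_of_pos hε.1] at hfin
  have hmono : η₀ * ε ^ κ ≤ ε ^ κ := by nlinarith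
  linarith
end

section
/- For every α > 0 and κ > 0 there exists a constant C₁ > 0 (depending only on α, κ and f) such that for all sufficiently small ε > 0 and every ξ ∈ [a₀ + ε^α, 2C₀], one has |Y(C₁·|log ε|, ξ) − a₊| ≤ ε^κ. -/
open Filter Set Topology

lemma barrier_up (g g' : ℝ → ℝ) (t₀ : ℝ)
    (hg : ∀ t ≥ t₀, HasDerivAt g (g' t) t) (B : ℝ) (h0 : g t₀ ≤ B)
    (hB : ∀ t ≥ t₀, g t = B → g' t < 0) :
    ∀ t ≥ t₀, g t ≤ B := by
  intro t₁ ht₁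
  by_contra hgt
  push_neg at hgt
  have hcont : ∀ t ≥ t₀, ContinuousAt g t := fun t ht => (hg t ht).continuousAt
  have ht₁' : t₀ < t₁ := by
    rcases eq_or_lt_of_le ht₁ with h | h
    · exact absurd (h ▸ h0) (not_le.mpr hgt)
    · exact h
  set S : Set ℝ := {t | t ∈ Set.Icc t₀ t₁ ∧ g t ≤ B} with hS
  have hne : S.Nonempty := ⟨t₀, ⟨le_refl _, le_of_lt ht₁'⟩, h0⟩
  have hbdd : BddAbove S := ⟨t₁, fun x hx => hx.1.2⟩
  set s := sSup S with hs
  have hs_mem_Icc : s ∈ Set.Icc t₀ t₁ := by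
    constructor
    · exact le_csSup hbdd ⟨⟨le_refl _, le_of_lt ht₁'⟩, h0⟩
    · exact csSup_le hne (fun x hx => hx.1.2)
  have hst₀ : t₀ ≤ s := hs_mem_Icc.1
  -- g s ≤ B
  have hgsB : g s ≤ B := by
    have hclos : s ∈ closure S := (isLUB_csSup hne hbdd).mem_closure hne
    rcases mem_closure_iff_seq_limit.mp hclos with ⟨u, hu, hul⟩
    have : Filter.Tendsto (g ∘ u) Filter.atTop (𝓝 (g s)) :=
      (hcont s hst₀).tendsto.comp hul
    exact le_of_tendsto this (Filter.Eventually.of_forall (fun n => (hu n).2))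
  have hst₁ : s < t₁ := lt_of_le_of_ne hs_mem_Icc.2 (fun h => by
    rw [h] at hgsB; exact absurd hgsB (not_le.mpr hgt))
  -- g s = B
  have hgsB' : g s = B := by
    by_contra hne'
    have hlt : g s < B := lt_of_le_of_ne hgsB hne'
    have hev : ∀ᶠ t in 𝓝 s, g t < B :=
      (hcont s hst₀).eventually_lt_const hlt
    rcases Metric.eventually_nhds_iff.mp hev with ⟨r, hr, hball⟩
    set t' := min (s + r / 2) ((s + t₁) / 2) with ht'
    have h1' : s < t' := by
      apply lt_min <;> [linarith; linarith]
    have h2' : t' < t₁ := lt_of_le_of_lt (min_le_right _ _) (by linarith)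
    have h3' : dist t' s < r := by
      rw [Real.dist_eq, abs_of_pos (by linarith)]
      have := min_le_left (s + r / 2) ((s + t₁) / 2)
      linarith
    have ht'S : t' ∈ S := ⟨⟨le_trans hst₀ (le_of_lt h1'), le_of_lt h2'⟩, le_of_lt (hball h3')⟩
    exact absurd (le_csSup hbdd ht'S) (not_le.mpr h1')
  -- derivative negative at s: contradiction
  have hd : g' s < 0 := hB s hst₀ hgsB'
  have hslope : Filter.Tendsto (slope g s) (𝓝[≠] s) (𝓝 (g' s)) :=
    hasDerivAt_iff_tendsto_slope.mp (hg s hst₀)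
  have hev : ∀ᶠ t in 𝓝[≠] s, slope g s t < 0 := hslope.eventually_lt_const hd
  have hev' : ∀ᶠ t in 𝓝[>] s, slope g s t < 0 :=
    hev.filter_mono (nhdsWithin_mono s (fun x hx => ne_of_gt hx))
  have hIoo : Set.Ioo s t₁ ∈ 𝓝[>] s := Ioo_mem_nhdsGT_of_mem ⟨le_refl _, hst₁⟩
  have hIoo' : ∀ᶠ t in 𝓝[>] s, t ∈ Set.Ioo s t₁ := hIoo
  rcases (hev'.and hIoo').exists with ⟨t', hsl, ht'mem⟩
  have hslt : (t' - s)⁻¹ * (g t' - g s) < 0 := by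
    simpa [slope_def_field, div_eq_inv_mul] using hsl
  have hpos : 0 < t' - s := sub_pos.mpr ht'mem.1
  have hgt' : g t' < g s := by
    nlinarith [inv_pos.mpr hpos]
  have ht'S : t' ∈ S := ⟨⟨le_trans hst₀ (le_of_lt ht'mem.1), le_of_lt ht'mem.2⟩,
    by rw [← hgsB']; exact le_of_lt hgt'⟩
  exact absurd (le_csSup hbdd ht'S) (not_le.mpr ht'mem.1)

lemma barrier_down (g g' : ℝ → ℝ) (t₀ : ℝ)
    (hg : ∀ t ≥ t₀, HasDerivAt g (g' t) t) (B : ℝ) (h0 : B ≤ g t₀)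
    (hB : ∀ t ≥ t₀, g t = B → 0 < g' t) :
    ∀ t ≥ t₀, B ≤ g t := by
  intro t ht
  have := barrier_up (fun s => -(g s)) (fun s => -(g' s)) t₀
    (fun t ht => (hg t ht).neg) (-B) (by simpa using h0)
    (fun t ht h => by
      have hgtB : g t = B := by
        have : -(g t) = -B := h
        linarith
      simpa using hB t ht hgtB) t ht
  simpa using this

lemma mono_aux (φ φ' : ℝ → ℝ) (a b : ℝ) (hab : a ≤ b)
    (hd : ∀ t ∈ Set.Icc a b, HasDerivAt φ (φ' t) t)
    (hpos : ∀ t ∈ Set.Icc a b, 0 ≤ φ' t) : φ a ≤ φ b := by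
  have hmono : MonotoneOn φ (Set.Icc a b) := by
    apply monotoneOn_of_deriv_nonneg (convex_Icc a b)
    · exact fun t ht => (hd t ht).continuousAt.continuousWithinAt
    · intro t ht
      rw [interior_Icc] at ht
      exact ((hd t (Set.mem_Icc_of_Ioo ht)).differentiableAt).differentiableWithinAt
    · intro t ht
      rw [interior_Icc] at ht
      rw [(hd t (Set.mem_Icc_of_Ioo ht)).deriv]
      exact hpos t (Set.mem_Icc_of_Ioo ht)
  exact hmono (Set.left_mem_Icc.mpr hab) (Set.right_mem_Icc.mpr hab) hab

set_option maxHeartbeats 3000000 in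
/-- Proposition 3.3: solutions of the ODE `dY/dτ = f(Y)` started in `[a₀ + ε^α, 2C₀]`
are `ε^κ`-close to `a₊` at time `C₁ |log ε|`. -/
theorem stmt_2
    (f : ℝ → ℝ) (hf : ContDiff ℝ 2 f)
    (p μ c C q : ℝ) (hp : 0 < p) (hμ : 0 < μ) (hc : 0 < c) (hCpos : 0 < C) (hq : 0 < q)
    (am a0 ap : ℝ) (h1 : am < a0) (h2 : a0 < ap)
    (hzeros : ∀ u, f u = 0 ↔ u = am ∨ u = a0 ∨ u = ap)
    (hfam : deriv f am = -p) (hfap : deriv f ap = -p) (hfa0 : deriv f a0 = μ)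
    (hgrowth : ∀ u : ℝ, f u ≤ C * (1 + |u| ^ q))
    (hfc : ∀ u, deriv f u ≤ c)
    (hsupp : ∀ u, ap ≤ u → f u ≤ -p * (u - ap))
    (hsubb : ∀ u, u ≤ am → -p * (u - am) ≤ f u)
    (C₀ : ℝ) (hC₀ : 1 < C₀) (hIcc : Set.Icc am ap ⊆ Set.Icc (-(2 * C₀)) (2 * C₀))
    (Y : ℝ → ℝ → ℝ)
    (hY0 : ∀ ξ ∈ Set.Icc (-(2 * C₀)) (2 * C₀), Y 0 ξ = ξ)
    (hYode : ∀ ξ ∈ Set.Icc (-(2 * C₀)) (2 * C₀), ∀ τ ≥ (0 : ℝ),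
      HasDerivAt (fun s => Y s ξ) (f (Y τ ξ)) τ) :
    ∀ α > (0 : ℝ), ∀ κ > (0 : ℝ), ∃ C₁ > (0 : ℝ), ∃ ε₀ > (0 : ℝ),
      ∀ ε ∈ Set.Ioo (0 : ℝ) ε₀, ∀ ξ ∈ Set.Icc (a0 + ε ^ α) (2 * C₀),
        |Y (C₁ * |Real.log ε|) ξ - ap| ≤ ε ^ κ := by
  intro α hα κ hκ
  -- basic facts about f
  have hcontf : Continuous f := hf.continuous
  have hdiff : Differentiable ℝ f := hf.differentiable two_ne_zero
  have hf' : ∀ u, HasDerivAt f (deriv f u) u := fun u => (hdiff u).hasDerivAt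
  have hderiv_cont : Continuous (deriv f) := by
    have h2' : ContDiff ℝ ((1 : ℕ) + 1) f := by exact_mod_cast hf
    exact ((contDiff_succ_iff_deriv.mp h2').2.2).continuous
  have hfa0' : f a0 = 0 := (hzeros a0).mpr (Or.inr (Or.inl rfl))
  have hfap' : f ap = 0 := (hzeros ap).mpr (Or.inr (Or.inr rfl))
  have ha0mem : a0 ∈ Set.Icc am ap := ⟨le_of_lt h1, le_of_lt h2⟩
  have hapmem : ap ∈ Set.Icc am ap := ⟨le_of_lt (h1.trans h2), le_refl _⟩
  have ha0b := hIcc ha0mem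
  have hapb := hIcc hapmem
  -- δ₁ : linear lower bound near a0
  obtain ⟨δ₁, hδ₁pos, hδ₁lt, hδ₁⟩ :
      ∃ δ₁ > 0, δ₁ ≤ (ap - a0)/2 ∧
        ∀ u ∈ Set.Icc a0 (a0 + δ₁), (μ/2) * (u - a0) ≤ f u := by
    have hopen : IsOpen {u : ℝ | μ/2 < deriv f u} := isOpen_lt continuous_const hderiv_cont
    have hmem : a0 ∈ {u : ℝ | μ/2 < deriv f u} := by
      simp only [Set.mem_setOf_eq, hfa0]; linarith
    obtain ⟨r, hr, hball⟩ := Metric.isOpen_iff.mp hopen a0 hmem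
    refine ⟨min (r/2) ((ap - a0)/2), lt_min (by linarith) (by linarith), min_le_right _ _, ?_⟩
    intro u hu
    have hur : u - a0 ≤ r/2 := by
      have h5 := hu.2
      have h6 := min_le_left (r/2) ((ap - a0)/2)
      linarith
    have hsub : ∀ t ∈ Set.Icc a0 u, μ/2 < deriv f t := by
      intro t ht
      apply hball
      rw [Metric.mem_ball, Real.dist_eq, abs_of_nonneg (by linarith [ht.1])]
      linarith [ht.2]
    have hm := mono_aux (fun t => f t - (μ/2)*t) (fun t => deriv f t - μ/2) a0 u hu.1
      (fun t ht => (hf' t).sub (by simpa using (hasDerivAt_id t).const_mul (μ/2)))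
      (fun t ht => by linarith [hsub t ht])
    linarith [hm, hfa0']
  -- f positive on (a0, ap)
  have hfpos : ∀ u, a0 < u → u < ap → 0 < f u := by
    intro u hu1 hu2
    rcases lt_trichotomy (f u) 0 with hneg | hzero | hpos
    · exfalso
      set v := min (a0 + δ₁) ((a0 + u)/2) with hvdef
      have hv1 : a0 < v := lt_min (by linarith) (by linarith)
      have hv2 : v < u := lt_of_le_of_lt (min_le_right _ _) (by linarith)
      have hv3 : v ≤ a0 + δ₁ := min_le_left _ _
      have hfv : 0 < f v :=
        lt_of_lt_of_le (mul_pos (by linarith) (by linarith)) (hδ₁ v ⟨hv1.le, hv3⟩)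
      have h0mem : (0:ℝ) ∈ Set.Ioo (f u) (f v) := ⟨hneg, hfv⟩
      obtain ⟨z, hzmem, hz0⟩ := intermediate_value_Ioo' hv2.le hcontf.continuousOn h0mem
      rcases (hzeros z).mp hz0 with h | h | h
      · subst h; linarith [hzmem.1]
      · subst h; linarith [hzmem.1]
      · subst h; linarith [hzmem.2]
    · exfalso
      rcases (hzeros u).mp hzero with h | h | h <;> subst h <;> linarith
    · exact hpos
  -- δ₂ : linear lower bound near ap (from the left)
  obtain ⟨δ₂, hδ₂pos, hδ₂lt, hδ₂⟩ :
      ∃ δ₂ > 0, δ₂ ≤ (ap - a0)/2 ∧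
        ∀ u ∈ Set.Icc (ap - δ₂) ap, (p/2) * (ap - u) ≤ f u := by
    have hopen : IsOpen {u : ℝ | deriv f u < -(p/2)} := isOpen_lt hderiv_cont continuous_const
    have hmem : ap ∈ {u : ℝ | deriv f u < -(p/2)} := by
      simp only [Set.mem_setOf_eq, hfap]; linarith
    obtain ⟨r, hr, hball⟩ := Metric.isOpen_iff.mp hopen ap hmem
    refine ⟨min (r/2) ((ap - a0)/2), lt_min (by linarith) (by linarith), min_le_right _ _, ?_⟩
    intro u hu
    have hur : ap - u ≤ r/2 := by
      have h5 := hu.1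
      have h6 := min_le_left (r/2) ((ap - a0)/2)
      linarith
    have hsub : ∀ t ∈ Set.Icc u ap, deriv f t < -(p/2) := by
      intro t ht
      apply hball
      rw [Metric.mem_ball, Real.dist_eq, abs_of_nonpos (by linarith [ht.2])]
      linarith [ht.1]
    have hm := mono_aux (fun t => -(f t) - (p/2)*t) (fun t => -(deriv f t) - p/2) u ap hu.2
      (fun t ht => ((hf' t).neg).sub (by simpa using (hasDerivAt_id t).const_mul (p/2)))
      (fun t ht => by linarith [hsub t ht])
    linarith [hm, hfap']
  -- minimum on the middle interval
  obtain ⟨m, hm, hmle⟩ :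
      ∃ m > 0, ∀ u ∈ Set.Icc (a0 + δ₁) (ap - δ₂), m ≤ f u := by
    have hne : (Set.Icc (a0 + δ₁) (ap - δ₂)).Nonempty :=
      Set.nonempty_Icc.mpr (by linarith)
    obtain ⟨z, hz, hzmin⟩ := isCompact_Icc.exists_isMinOn hne hcontf.continuousOn
    exact ⟨f z, hfpos z (by linarith [hz.1]) (by linarith [hz.2]),
      fun u hu => isMinOn_iff.mp hzmin u hu⟩
  set ν : ℝ := min (μ/2) (m/(ap - a0)) with hνdef
  have hν : 0 < ν := lt_min (by linarith) (div_pos hm (by linarith))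
  have hν_bound : ∀ u ∈ Set.Icc a0 (ap - δ₂), ν * (u - a0) ≤ f u := by
    intro u hu
    rcases le_total u (a0 + δ₁) with h | h
    · calc ν * (u - a0) ≤ (μ/2) * (u - a0) := by
            apply mul_le_mul_of_nonneg_right (min_le_left _ _) (by linarith [hu.1])
        _ ≤ f u := hδ₁ u ⟨hu.1, h⟩
    · calc ν * (u - a0) ≤ (m/(ap - a0)) * (u - a0) := by
            apply mul_le_mul_of_nonneg_right (min_le_right _ _) (by linarith [hu.1])
        _ ≤ (m/(ap - a0)) * (ap - a0) := by
            apply mul_le_mul_of_nonneg_left (by linarith [hu.2]) (le_of_lt (div_pos hm (by linarith)))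
        _ = m := div_mul_cancel₀ m (by linarith)
        _ ≤ f u := hmle u ⟨h, hu.2⟩
  set lam : ℝ := p/4 with hlamdef
  have hlam : 0 < lam := by positivity
  set K : ℝ := 2*C₀ - ap + δ₂ with hKdef
  have hK : 0 < K := by
    have : ap ≤ 2*C₀ := hapb.2
    linarith
  set MK : ℝ := 1 + max 0 (Real.log K) with hMKdef
  have hMK : 0 < MK := by positivity
  set K₀ : ℝ := (1 + max 0 (Real.log (ap - a0))) / ν with hK₀def
  have hK₀ : 0 < K₀ := by positivity
  set C₁ : ℝ := α/ν + κ/lam + 1 with hC₁def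
  set L₀ : ℝ := K₀ + MK / lam with hL₀def
  have hL₀ : 0 < L₀ := by positivity
  set ε₀ : ℝ := min (1/2) (Real.exp (-L₀)) with hε₀def
  refine ⟨C₁, by positivity, ε₀, lt_min (by norm_num) (Real.exp_pos _), ?_⟩
  intro ε hε ξ hξ
  have hεpos : 0 < ε := hε.1
  have hεsmall : ε < Real.exp (-L₀) := lt_of_lt_of_le hε.2 (min_le_right _ _)
  have hlogε : Real.log ε < -L₀ := by
    calc Real.log ε < Real.log (Real.exp (-L₀)) := Real.log_lt_log hεpos hεsmall
      _ = -L₀ := Real.log_exp _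
  set L : ℝ := |Real.log ε| with hLdef
  have hLeq : L = -Real.log ε := abs_of_neg (by linarith)
  have hLge : L₀ < L := by rw [hLeq]; linarith
  have hLpos : 0 < L := lt_trans hL₀ hLge
  have hεα : (0:ℝ) < ε ^ α := Real.rpow_pos_of_pos hεpos α
  -- the solution
  have hξmem : ξ ∈ Set.Icc (-(2 * C₀)) (2 * C₀) := by
    constructor
    · have := ha0b.1; have := hξ.1; linarith
    · exact hξ.2
  set g : ℝ → ℝ := fun τ => Y τ ξ with hgdef
  have hg0 : g 0 = ξ := hY0 ξ hξmem
  have hgd : ∀ τ ≥ (0:ℝ), HasDerivAt g (f (g τ)) τ := hYode ξ hξmem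
  -- global upper bound
  have hupper : ∀ τ ≥ (0:ℝ), g τ ≤ 2*C₀ := by
    intro τ hτ
    have hall : ∀ η > 0, g τ ≤ 2*C₀ + η := by
      intro η hη
      refine barrier_up g (fun t => f (g t)) 0 hgd (2*C₀ + η)
        (by rw [hg0]; linarith [hξ.2]) ?_ τ hτ
      intro t ht hgt
      show f (g t) < 0
      rw [hgt]
      have h5 : ap ≤ 2*C₀ + η := by linarith [hapb.2]
      have h6 := hsupp (2*C₀ + η) h5
      have h7 : 0 < p * (2*C₀ + η - ap) := mul_pos hp (by linarith [hapb.2])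
      linarith
    by_contra hcon
    push_neg at hcon
    have := hall ((g τ - 2*C₀)/2) (by linarith)
    linarith
  set T₀ : ℝ := (α/ν)*L + K₀ with hT₀def
  have hT₀ : (0:ℝ) ≤ T₀ := by positivity
  -- Phase 0 : reach ap - δ₂
  obtain ⟨τ₀, hτ₀mem, hτ₀⟩ : ∃ τ₀ ∈ Set.Icc (0:ℝ) T₀, ap - δ₂ ≤ g τ₀ := by
    by_contra hcon
    push_neg at hcon
    have hξlt : ξ < ap - δ₂ := by
      have := hcon 0 ⟨le_refl _, hT₀⟩; rwa [hg0] at this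
    have hξgt : a0 < ξ := by linarith [hξ.1, hεα]
    have hfξ : 0 < f ξ := hfpos ξ hξgt (by linarith)
    have hgeξ : ∀ t ≥ (0:ℝ), ξ ≤ g t :=
      barrier_down g (fun t => f (g t)) 0 hgd ξ (le_of_eq hg0.symm)
        (fun t ht h => by show 0 < f (g t); rw [h]; exact hfξ)
    have hφd : ∀ t ∈ Set.Icc (0:ℝ) T₀,
        HasDerivAt (fun s => Real.exp (-ν*s) * (g s - a0))
          (Real.exp (-ν*t) * (f (g t) - ν*(g t - a0))) t := by
      intro t ht
      have hinner : HasDerivAt (fun s : ℝ => -ν*s) (-ν) t := by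
        simpa using (hasDerivAt_id t).const_mul (-ν)
      have hE : HasDerivAt (fun s : ℝ => Real.exp (-ν*s)) (Real.exp (-ν*t) * (-ν)) t :=
        hinner.exp
      have hG : HasDerivAt (fun s => g s - a0) (f (g t)) t := (hgd t ht.1).sub_const a0
      refine (hE.fun_mul hG).congr_deriv ?_
      ring
    have hφpos : ∀ t ∈ Set.Icc (0:ℝ) T₀,
        0 ≤ Real.exp (-ν*t) * (f (g t) - ν*(g t - a0)) := by
      intro t ht
      have h5 : ξ ≤ g t := hgeξ t ht.1
      have h6 : g t < ap - δ₂ := hcon t ht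
      have h7 := hν_bound (g t) ⟨by linarith, by linarith⟩
      have h8 := Real.exp_pos (-ν*t)
      exact mul_nonneg h8.le (by linarith)
    have hmono := mono_aux _ _ 0 T₀ hT₀ hφd hφpos
    simp only [mul_zero, neg_zero, Real.exp_zero, one_mul, hg0] at hmono
    -- hmono : ξ - a0 ≤ exp(-ν T₀) * (g T₀ - a0)
    have hstep : ε ^ α ≤ Real.exp (-ν*T₀) * (g T₀ - a0) := by
      have := hξ.1; linarith
    have hgT : Real.exp (ν*T₀) * (ε ^ α) ≤ g T₀ - a0 := by
      have h5 := mul_le_mul_of_nonneg_left hstep (Real.exp_pos (ν*T₀)).le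
      rw [← mul_assoc, ← Real.exp_add] at h5
      have h6 : ν*T₀ + -ν*T₀ = 0 := by ring
      rwa [h6, Real.exp_zero, one_mul] at h5
    have hεα' : ε ^ α = Real.exp (-(α*L)) := by
      rw [Real.rpow_def_of_pos hεpos, hLeq]; ring_nf
    have hνT : ν * T₀ = α * L + ν * K₀ := by
      rw [hT₀def, mul_add, ← mul_assoc, mul_comm ν (α/ν), div_mul_cancel₀ α (ne_of_gt hν)]
    have hνK₀ : ν * K₀ = 1 + max 0 (Real.log (ap - a0)) := by
      rw [hK₀def, mul_comm, div_mul_cancel₀ _ (ne_of_gt hν)]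
    have hbig : ap - a0 ≤ Real.exp (ν*T₀) * ε ^ α := by
      rw [hεα', ← Real.exp_add]
      calc ap - a0 = Real.exp (Real.log (ap - a0)) := (Real.exp_log (by linarith)).symm
        _ ≤ Real.exp (ν*T₀ + -(α*L)) := by
            apply Real.exp_le_exp.mpr
            have := le_max_right (0:ℝ) (Real.log (ap - a0))
            linarith [hνT, hνK₀]
    have hcontra := hcon T₀ ⟨hT₀, le_refl _⟩
    linarith
  -- Phase 1 : stay above ap - δ₂
  have hlow : ∀ τ ≥ τ₀, ap - δ₂ ≤ g τ := by
    intro τ hτ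
    refine barrier_down g (fun t => f (g t)) τ₀
      (fun t ht => hgd t (le_trans hτ₀mem.1 ht)) (ap - δ₂) hτ₀ ?_ τ hτ
    intro t ht h
    show 0 < f (g t)
    rw [h]
    exact hfpos (ap - δ₂) (by linarith) (by linarith)
  -- exponential decay
  have hdecay : ∀ τ ≥ τ₀, |g τ - ap| ≤ K * Real.exp (-(lam * (τ - τ₀))) := by
    have hFd : ∀ t ≥ τ₀, HasDerivAt (fun s => Real.exp (lam*(s - τ₀)) * (g s - ap))
        ((fun s => Real.exp (lam*(s - τ₀)) * (lam*(g s - ap) + f (g s))) t) t := by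
      intro t ht
      have hinner : HasDerivAt (fun s : ℝ => lam*(s - τ₀)) lam t := by
        simpa using ((hasDerivAt_id t).sub_const τ₀).const_mul lam
      have hE : HasDerivAt (fun s : ℝ => Real.exp (lam*(s - τ₀)))
          (Real.exp (lam*(t - τ₀)) * lam) t := hinner.exp
      have hG : HasDerivAt (fun s => g s - ap) (f (g t)) t :=
        (hgd t (le_trans hτ₀mem.1 ht)).sub_const ap
      refine (hE.fun_mul hG).congr_deriv ?_
      ring
    have hup : ∀ t ≥ τ₀, Real.exp (lam*(t - τ₀)) * (g t - ap) ≤ K := by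
      intro t ht
      have hall : ∀ η > 0, Real.exp (lam*(t - τ₀)) * (g t - ap) ≤ K + η := by
        intro η hη
        refine barrier_up _ _ τ₀ hFd (K + η) ?_ ?_ t ht
        · simp only [sub_self, mul_zero, Real.exp_zero, one_mul]
          have := hupper τ₀ hτ₀mem.1
          linarith
        · intro s hs hFs
          have hFs' : Real.exp (lam*(s - τ₀)) * (g s - ap) = K + η := hFs
          have hexp := Real.exp_pos (lam*(s - τ₀))
          have hgs : ap < g s := by
            by_contra hle
            push_neg at hle
            have h9 : Real.exp (lam*(s - τ₀)) * (g s - ap) ≤ 0 :=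
              mul_nonpos_of_nonneg_of_nonpos hexp.le (by linarith)
            linarith
          have hfs := hsupp (g s) hgs.le
          have hbr : lam*(g s - ap) + f (g s) < 0 := by
            rw [hlamdef]
            have h9 : 0 < p * (g s - ap) := mul_pos hp (by linarith)
            linarith
          show Real.exp (lam*(s - τ₀)) * (lam*(g s - ap) + f (g s)) < 0
          exact mul_neg_of_pos_of_neg hexp hbr
      by_contra hcon
      push_neg at hcon
      have := hall ((Real.exp (lam*(t - τ₀)) * (g t - ap) - K)/2) (by linarith)
      linarith
    have hdn : ∀ t ≥ τ₀, -K ≤ Real.exp (lam*(t - τ₀)) * (g t - ap) := by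
      intro t ht
      have hall : ∀ η > 0, -(K + η) ≤ Real.exp (lam*(t - τ₀)) * (g t - ap) := by
        intro η hη
        refine barrier_down _ _ τ₀ hFd (-(K + η)) ?_ ?_ t ht
        · simp only [sub_self, mul_zero, Real.exp_zero, one_mul]
          have h5 : ap ≤ 2*C₀ := hapb.2
          linarith [hτ₀]
        · intro s hs hFs
          have hFs' : Real.exp (lam*(s - τ₀)) * (g s - ap) = -(K + η) := hFs
          have hexp := Real.exp_pos (lam*(s - τ₀))
          have hgs : g s < ap := by
            by_contra hle
            push_neg at hle
            have h9 : 0 ≤ Real.exp (lam*(s - τ₀)) * (g s - ap) :=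
              mul_nonneg hexp.le (by linarith)
            linarith
          have hlow' := hlow s hs
          have hfs := hδ₂ (g s) ⟨hlow', hgs.le⟩
          have hbr : 0 < lam*(g s - ap) + f (g s) := by
            rw [hlamdef]
            have h9 : 0 < p * (ap - g s) := mul_pos hp (by linarith)
            linarith
          show 0 < Real.exp (lam*(s - τ₀)) * (lam*(g s - ap) + f (g s))
          exact mul_pos hexp hbr
      by_contra hcon
      push_neg at hcon
      have := hall ((-K - Real.exp (lam*(t - τ₀)) * (g t - ap))/2) (by linarith)
      linarith
    intro τ hτ
    have hup' := hup τ hτ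
    have hdn' := hdn τ hτ
    have e1 : Real.exp (-(lam*(τ - τ₀))) * Real.exp (lam*(τ - τ₀)) = 1 := by
      rw [← Real.exp_add]; simp
    have h6 : g τ - ap = Real.exp (-(lam*(τ - τ₀))) * (Real.exp (lam*(τ - τ₀)) * (g τ - ap)) := by
      rw [← mul_assoc, e1, one_mul]
    have hm1 := mul_le_mul_of_nonneg_left hup' (Real.exp_pos (-(lam*(τ - τ₀)))).le
    have hm2 := mul_le_mul_of_nonneg_left hdn' (Real.exp_pos (-(lam*(τ - τ₀)))).le
    rw [← h6] at hm1 hm2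
    rw [abs_le]
    constructor
    · linarith [hm2]
    · linarith [hm1]
  -- conclusion
  set T : ℝ := C₁ * L with hTdef
  have hTT₀ : T₀ ≤ T := by
    have h1' : T - T₀ = (κ/lam) * L + L - K₀ := by rw [hTdef, hT₀def, hC₁def]; ring
    have h2' : 0 ≤ (κ/lam) * L := mul_nonneg (div_nonneg hκ.le hlam.le) hLpos.le
    have h3' : 0 ≤ MK / lam := div_nonneg hMK.le hlam.le
    have h4' : K₀ ≤ L := by rw [hL₀def] at hLge; linarith
    have h5' : 0 ≤ T - T₀ := by rw [h1']; linarith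
    linarith
  have hTτ₀ : τ₀ ≤ T := le_trans hτ₀mem.2 hTT₀
  have hmain := hdecay T hTτ₀
  have hexp_mono : Real.exp (-(lam * (T - τ₀))) ≤ Real.exp (-(lam * (T - T₀))) := by
    apply Real.exp_le_exp.mpr
    have : lam * (T - T₀) ≤ lam * (T - τ₀) :=
      mul_le_mul_of_nonneg_left (by linarith [hτ₀mem.2]) hlam.le
    linarith
  have hfinal : K * Real.exp (-(lam * (T - T₀))) ≤ ε ^ κ := by
    have hεκ : ε ^ κ = Real.exp (κ * Real.log ε) := by
      rw [Real.rpow_def_of_pos hεpos]; ring_nf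
    have hKexp : K = Real.exp (Real.log K) := (Real.exp_log hK).symm
    rw [hεκ, hKexp, ← Real.exp_add]
    apply Real.exp_le_exp.mpr
    -- need : log K - lam*(T - T₀) ≤ κ * log ε = -κ*L
    have hkey : lam * (T - T₀) = κ * L + lam * L - lam * K₀ := by
      have : lam * (κ/lam) = κ := mul_div_cancel₀ κ (ne_of_gt hlam)
      rw [hTdef, hT₀def, hC₁def]
      field_simp
      ring
    have hlamL : lam * K₀ + MK ≤ lam * L := by
      have := mul_le_mul_of_nonneg_left (le_of_lt hLge) (le_of_lt hlam)
      have hL₀' : lam * L₀ = lam * K₀ + MK := by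
        rw [hL₀def, mul_add, mul_div_cancel₀ MK (ne_of_gt hlam)]
      linarith
    have hlogK : Real.log K ≤ MK := by
      rw [hMKdef]; have := le_max_right (0:ℝ) (Real.log K); linarith
    have hκL : κ * Real.log ε = -(κ * L) := by rw [hLeq]; ring
    linarith [hkey, hlamL, hlogK, hκL]
  calc |Y (C₁ * |Real.log ε|) ξ - ap| = |g T - ap| := by rw [hTdef, hLdef]
    _ ≤ K * Real.exp (-(lam * (T - τ₀))) := hmain
    _ ≤ K * Real.exp (-(lam * (T - T₀))) := by
        apply mul_le_mul_of_nonneg_left hexp_mono (le_of_lt hK)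
    _ ≤ ε ^ κ := hfinal
end

section
/- For every α > 0 and κ > 0 there exists a constant C₁ > 0 (depending only on α, κ and f) such that for all sufficiently small ε > 0 and every ξ ∈ [−2C₀, a₀ − ε^α], one has |Y(C₁·|log ε|, ξ) − a₋| ≤ ε^κ. -/
open Set Topology Filter

lemma crossing_aux {g B gd Bd : ℝ → ℝ} {a b : ℝ}
    (hg : ∀ τ ∈ Set.Icc a b, HasDerivAt g (gd τ) τ)
    (hB : ∀ τ ∈ Set.Icc a b, HasDerivAt B (Bd τ) τ)
    (h0 : g a ≤ B a)
    (hlt : ∀ τ ∈ Set.Ico a b, g τ = B τ → gd τ < Bd τ) :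
    ∀ τ ∈ Set.Icc a b, g τ ≤ B τ := by
  intro τ hτ
  exact image_le_of_deriv_right_lt_deriv_boundary'
    (fun s hs => (hg s hs).continuousAt.continuousWithinAt)
    (fun s hs => (hg s (Set.Ico_subset_Icc_self hs)).hasDerivWithinAt)
    h0
    (fun s hs => (hB s hs).continuousAt.continuousWithinAt)
    (fun s hs => (hB s (Set.Ico_subset_Icc_self hs)).hasDerivWithinAt)
    hlt hτ

lemma hasDerivAt_bar (c c₂ d e τ : ℝ) :
    HasDerivAt (fun t => d + e * Real.exp (c * t + c₂)) (c * e * Real.exp (c * τ + c₂)) τ := by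
  have h : HasDerivAt (fun t : ℝ => c * t + c₂) c τ := by
    simpa using ((hasDerivAt_id τ).const_mul c).add_const c₂
  have := (h.exp.const_mul e).const_add d
  exact this.congr_deriv (by ring)

lemma hasDerivAt_lin (d e τ : ℝ) :
    HasDerivAt (fun t => d + e * t) e τ := by
  simpa using ((hasDerivAt_id τ).const_mul e).const_add d

lemma fneg_aux {f : ℝ → ℝ} {μ am a0 ap : ℝ} (hμ : 0 < μ)
    (h1 : am < a0) (h2 : a0 < ap)
    (hzeros : ∀ u, f u = 0 ↔ u = am ∨ u = a0 ∨ u = ap)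
    (hfa0 : deriv f a0 = μ) (hfd : Differentiable ℝ f) :
    ∀ v ∈ Set.Ioo am a0, f v < 0 := by
  have hfc : Continuous f := hfd.continuous
  have hfa00 : f a0 = 0 := (hzeros a0).mpr (Or.inr (Or.inl rfl))
  obtain ⟨u₀, hu₀mem, hu₀⟩ : ∃ u₀ ∈ Set.Ioo am a0, f u₀ < 0 := by
    have hd : HasDerivAt f μ a0 := by
      have := (hfd a0).hasDerivAt
      rwa [hfa0] at this
    have hs : Filter.Tendsto (slope f a0) (𝓝[<] a0) (𝓝 μ) :=
      (hasDerivAt_iff_tendsto_slope.mp hd).mono_left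
        (nhdsWithin_mono _ (fun x hx => ne_of_lt hx))
    have h3 : ∀ᶠ x in 𝓝[<] a0, 0 < slope f a0 x :=
      hs.eventually (eventually_gt_nhds hμ)
    have h4 : ∀ᶠ x in 𝓝[<] a0, x ∈ Set.Ioo am a0 :=
      Ioo_mem_nhdsLT_of_mem ⟨h1, le_refl a0⟩
    obtain ⟨x, hx1, hx2⟩ := (h3.and h4).exists
    refine ⟨x, hx2, ?_⟩
    have hslope : slope f a0 x = f x / (x - a0) := by
      simp [slope_def_field, hfa00]
    rw [hslope] at hx1
    have hxa : x - a0 < 0 := by linarith [hx2.2]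
    by_contra hcon
    push_neg at hcon
    have : f x / (x - a0) ≤ 0 := div_nonpos_of_nonneg_of_nonpos hcon hxa.le
    linarith
  intro v hv
  rcases lt_trichotomy (f v) 0 with h | h | h
  · exact h
  · exfalso
    rcases (hzeros v).mp h with h' | h' | h' <;>
      [exact absurd h' (ne_of_gt hv.1); exact absurd h' (ne_of_lt hv.2);
       exact absurd h' (ne_of_lt (hv.2.trans h2))]
  · exfalso
    rcases lt_or_gt_of_ne (show u₀ ≠ v from fun he => by rw [he] at hu₀; linarith) with hlt | hgt
    · obtain ⟨z, hz, hz0⟩ := intermediate_value_Icc hlt.le hfc.continuousOn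
        (show (0:ℝ) ∈ Set.Icc (f u₀) (f v) from ⟨hu₀.le, h.le⟩)
      rcases (hzeros z).mp hz0 with h' | h' | h' <;>
        [linarith [hz.1, hu₀mem.1]; linarith [hz.2, hv.2]; linarith [hz.2, hv.2]]
    · obtain ⟨z, hz, hz0⟩ := intermediate_value_Icc' hgt.le hfc.continuousOn
        (show (0:ℝ) ∈ Set.Icc (f u₀) (f v) from ⟨hu₀.le, h.le⟩)
      rcases (hzeros z).mp hz0 with h' | h' | h' <;>
        [linarith [hz.1, hv.1]; linarith [hz.2, hu₀mem.2]; linarith [hz.2, hu₀mem.2]]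

lemma mvt_left_aux {f : ℝ → ℝ} {a0 lam r : ℝ} (hfd : Differentiable ℝ f) (hf0 : f a0 = 0)
    (hr : ∀ u, |u - a0| ≤ r → lam ≤ deriv f u) :
    ∀ u, a0 - r ≤ u → u ≤ a0 → f u ≤ -lam * (a0 - u) := by
  intro u hu1 hu2
  rcases eq_or_lt_of_le hu2 with he | hlt
  · rw [he, hf0]; ring_nf; simp
  · obtain ⟨ζ, hζ, hζeq⟩ := exists_hasDerivAt_eq_slope f (deriv f) hlt
      hfd.continuous.continuousOn (fun x _ => (hfd x).hasDerivAt)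
    have hζr : |ζ - a0| ≤ r := by
      rw [abs_le]; constructor <;> [linarith [hζ.1]; linarith [hζ.2]]
    have := hr ζ hζr
    rw [hζeq, hf0] at this
    have hpos : 0 < a0 - u := by linarith
    rw [le_div_iff₀ hpos] at this
    nlinarith

lemma mvt_right_aux {f : ℝ → ℝ} {am lam r : ℝ} (hfd : Differentiable ℝ f) (hf0 : f am = 0)
    (hr : ∀ u, |u - am| ≤ r → deriv f u ≤ -lam) :
    ∀ u, am ≤ u → u ≤ am + r → f u ≤ -lam * (u - am) := by
  intro u hu1 hu2
  rcases eq_or_lt_of_le hu1 with he | hlt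
  · rw [← he, hf0]; ring_nf; simp
  · obtain ⟨ζ, hζ, hζeq⟩ := exists_hasDerivAt_eq_slope f (deriv f) hlt
      hfd.continuous.continuousOn (fun x _ => (hfd x).hasDerivAt)
    have hζr : |ζ - am| ≤ r := by
      rw [abs_le]; constructor <;> [linarith [hζ.1]; linarith [hζ.2]]
    have := hr ζ hζr
    rw [hζeq, hf0] at this
    have hpos : 0 < u - am := by linarith
    rw [div_le_iff₀ hpos] at this
    nlinarith

set_option maxHeartbeats 1000000 in
/-- Proposition 3.4: solutions of the ODE `dY/dτ = f(Y)` started in `[-2C₀, a₀ - ε^α]`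
are `ε^κ`-close to `a₋` at time `C₁ |log ε|`. -/
theorem stmt_3
    (f : ℝ → ℝ) (hf : ContDiff ℝ 2 f)
    (p μ c C q : ℝ) (hp : 0 < p) (hμ : 0 < μ) (hc : 0 < c) (hCpos : 0 < C) (hq : 0 < q)
    (am a0 ap : ℝ) (h1 : am < a0) (h2 : a0 < ap)
    (hzeros : ∀ u, f u = 0 ↔ u = am ∨ u = a0 ∨ u = ap)
    (hfam : deriv f am = -p) (hfap : deriv f ap = -p) (hfa0 : deriv f a0 = μ)
    (hgrowth : ∀ u : ℝ, f u ≤ C * (1 + |u| ^ q))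
    (hfc : ∀ u, deriv f u ≤ c)
    (hsupp : ∀ u, ap ≤ u → f u ≤ -p * (u - ap))
    (hsubb : ∀ u, u ≤ am → -p * (u - am) ≤ f u)
    (C₀ : ℝ) (hC₀ : 1 < C₀) (hIcc : Set.Icc am ap ⊆ Set.Icc (-(2 * C₀)) (2 * C₀))
    (Y : ℝ → ℝ → ℝ)
    (hY0 : ∀ ξ ∈ Set.Icc (-(2 * C₀)) (2 * C₀), Y 0 ξ = ξ)
    (hYode : ∀ ξ ∈ Set.Icc (-(2 * C₀)) (2 * C₀), ∀ τ ≥ (0 : ℝ),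
      HasDerivAt (fun s => Y s ξ) (f (Y τ ξ)) τ) :
    ∀ α > (0 : ℝ), ∀ κ > (0 : ℝ), ∃ C₁ > (0 : ℝ), ∃ ε₀ > (0 : ℝ),
      ∀ ε ∈ Set.Ioo (0 : ℝ) ε₀, ∀ ξ ∈ Set.Icc (-(2 * C₀)) (a0 - ε ^ α),
        |Y (C₁ * |Real.log ε|) ξ - am| ≤ ε ^ κ := by
  intro α hα κ hκ
  have hfd : Differentiable ℝ f := hf.differentiable (by norm_num)
  have hdc : Continuous (deriv f) := hf.continuous_deriv (by norm_num)
  have hfam0 : f am = 0 := (hzeros am).mpr (Or.inl rfl)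
  have hfa00 : f a0 = 0 := (hzeros a0).mpr (Or.inr (Or.inl rfl))
  have hneg := fneg_aux hμ h1 h2 hzeros hfa0 hfd
  -- neighborhood of a0 where deriv f ≥ μ/2
  obtain ⟨r0, hr0pos, hr0⟩ : ∃ r > (0:ℝ), ∀ u, |u - a0| ≤ r → μ/2 ≤ deriv f u := by
    obtain ⟨r, hrpos, hr⟩ := Metric.continuousAt_iff.mp (hdc.continuousAt (x := a0)) (μ/2)
      (by positivity)
    refine ⟨r/2, by positivity, fun u hu => ?_⟩
    have h := hr (show dist u a0 < r by rw [Real.dist_eq]; linarith)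
    rw [Real.dist_eq, hfa0] at h
    have := abs_lt.mp h
    linarith [this.1]
  -- neighborhood of am where deriv f ≤ -p/2
  obtain ⟨r1, hr1pos, hr1⟩ : ∃ r > (0:ℝ), ∀ u, |u - am| ≤ r → deriv f u ≤ -(p/2) := by
    obtain ⟨r, hrpos, hr⟩ := Metric.continuousAt_iff.mp (hdc.continuousAt (x := am)) (p/2)
      (by positivity)
    refine ⟨r/2, by positivity, fun u hu => ?_⟩
    have h := hr (show dist u am < r by rw [Real.dist_eq]; linarith)
    rw [Real.dist_eq, hfam] at h
    have := abs_lt.mp h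
    linarith [this.2]
  obtain ⟨δ₀, hδ₀def⟩ : ∃ x : ℝ, x = min (min r0 ((a0 - am)/3)) 1 := ⟨_, rfl⟩
  have hδ₀pos : 0 < δ₀ := by rw [hδ₀def]; exact lt_min (lt_min hr0pos (by linarith)) one_pos
  have hδ₀r : δ₀ ≤ r0 := by rw [hδ₀def]; exact (min_le_left _ _).trans (min_le_left _ _)
  have hδ₀A : δ₀ ≤ (a0 - am)/3 := by
    rw [hδ₀def]; exact (min_le_left _ _).trans (min_le_right _ _)
  have hδ₀1 : δ₀ ≤ 1 := by rw [hδ₀def]; exact min_le_right _ _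
  have hF4 : ∀ u, a0 - δ₀ ≤ u → u ≤ a0 → f u ≤ -(μ/2) * (a0 - u) :=
    mvt_left_aux hfd hfa00 (fun v hv => hr0 v (hv.trans hδ₀r))
  obtain ⟨δ₁, hδ₁def⟩ : ∃ x : ℝ, x = min (min r1 ((a0 - am)/3)) 1 := ⟨_, rfl⟩
  have hδ₁pos : 0 < δ₁ := by rw [hδ₁def]; exact lt_min (lt_min hr1pos (by linarith)) one_pos
  have hδ₁r : δ₁ ≤ r1 := by rw [hδ₁def]; exact (min_le_left _ _).trans (min_le_left _ _)
  have hδ₁A : δ₁ ≤ (a0 - am)/3 := by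
    rw [hδ₁def]; exact (min_le_left _ _).trans (min_le_right _ _)
  have hδ₁1 : δ₁ ≤ 1 := by rw [hδ₁def]; exact min_le_right _ _
  have hF3 : ∀ u, am ≤ u → u ≤ am + δ₁ → f u ≤ -(p/2) * (u - am) :=
    mvt_right_aux hfd hfam0 (fun v hv => hr1 v (hv.trans hδ₁r))
  -- uniform negativity in the middle
  have hsubint : am + δ₁ ≤ a0 - δ₀ := by linarith
  obtain ⟨w, hw, hwmax⟩ := isCompact_Icc.exists_isMaxOn
    (⟨am + δ₁, le_refl _, hsubint⟩ : (Set.Icc (am + δ₁) (a0 - δ₀)).Nonempty)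
    hfd.continuous.continuousOn
  have hwneg : f w < 0 := hneg w ⟨by linarith [hw.1], by linarith [hw.2]⟩
  obtain ⟨m, hmdef⟩ : ∃ x : ℝ, x = -f w := ⟨_, rfl⟩
  have hm : 0 < m := by rw [hmdef]; linarith
  have hF5 : ∀ u, am + δ₁ ≤ u → u ≤ a0 - δ₀ → f u ≤ -m := by
    intro u h1' h2'
    rw [hmdef, neg_neg]
    exact hwmax ⟨h1', h2'⟩
  -- global constants
  have hamap : am ≤ ap := by linarith
  have ham2C : -(2*C₀) ≤ am := (hIcc ⟨le_refl am, hamap⟩).1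
  have hap2C : ap ≤ 2*C₀ := (hIcc ⟨hamap, le_refl ap⟩).2
  obtain ⟨K, hKdef⟩ : ∃ x : ℝ, x = am + 2*C₀ := ⟨_, rfl⟩
  have hK0 : 0 ≤ K := by rw [hKdef]; linarith
  have hlogK2 : 0 < Real.log (K + 2) := Real.log_pos (by linarith)
  have hlogK1 : 0 ≤ Real.log (K + 1) := Real.log_nonneg (by linarith)
  have hlogK12 : Real.log (K + 1) ≤ Real.log (K + 2) :=
    Real.log_le_log (by linarith) (by linarith)
  have hC₁pos : 0 < 3*α/μ + 2*(a0 - am)/m + 5*κ/p + 2/p*Real.log (K + 2) := by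
    have h1' : 0 < 3*α/μ := by positivity
    have h2' : 0 < 2*(a0 - am)/m := by
      apply div_pos (by linarith) hm
    have h3' : 0 < 5*κ/p := by positivity
    have h4' : 0 < 2/p*Real.log (K + 2) := by positivity
    linarith
  refine ⟨3*α/μ + 2*(a0 - am)/m + 5*κ/p + 2/p*Real.log (K + 2), hC₁pos,
    min (Real.exp (-1)) (δ₀ ^ (1/α)), lt_min (Real.exp_pos _) (Real.rpow_pos_of_pos hδ₀pos _),
    ?_⟩
  rintro ε ⟨hε0, hεlt⟩ ξ ⟨hξl, hξu⟩
  have hεe : ε < Real.exp (-1) := lt_of_lt_of_le hεlt (min_le_left _ _)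
  have hεδ : ε < δ₀ ^ (1/α) := lt_of_lt_of_le hεlt (min_le_right _ _)
  have hlogε : Real.log ε < -1 := by
    have := Real.log_lt_log hε0 hεe
    rwa [Real.log_exp] at this
  obtain ⟨L, hLdef⟩ : ∃ x : ℝ, x = |Real.log ε| := ⟨_, rfl⟩
  rw [← hLdef]
  have hLe : L = -Real.log ε := by rw [hLdef]; exact abs_of_neg (by linarith)
  have hL1 : 1 ≤ L := by rw [hLe]; linarith
  have hLpos : 0 < L := by linarith only [hL1]
  obtain ⟨δ, hδdef⟩ : ∃ x : ℝ, x = ε ^ α := ⟨_, rfl⟩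
  rw [← hδdef] at hξu
  have hδpos : 0 < δ := by rw [hδdef]; exact Real.rpow_pos_of_pos hε0 α
  have hδlt : δ < δ₀ := by
    rw [hδdef]
    have h := Real.rpow_lt_rpow hε0.le hεδ hα
    have he : (δ₀ ^ (1/α)) ^ α = δ₀ := by
      rw [← Real.rpow_mul hδ₀pos.le, one_div_mul_cancel (ne_of_gt hα), Real.rpow_one]
    rw [he] at h
    exact h
  have hlogδ : Real.log δ = α * Real.log ε := by rw [hδdef]; exact Real.log_rpow hε0 α
  obtain ⟨t₁, ht₁def⟩ : ∃ x : ℝ, x = 3/μ * Real.log (δ₀/δ) := ⟨_, rfl⟩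
  have hlogq : Real.log (δ₀/δ) = Real.log δ₀ - Real.log δ :=
    Real.log_div (ne_of_gt hδ₀pos) (ne_of_gt hδpos)
  have hlogδ₀ : Real.log δ₀ ≤ 0 := Real.log_nonpos hδ₀pos.le hδ₀1
  have h3μ : 0 < 3/μ := by positivity
  have ht₁0 : 0 ≤ t₁ := by
    have hle : Real.log δ ≤ Real.log δ₀ := Real.log_le_log hδpos hδlt.le
    rw [ht₁def, hlogq]
    have h0' : 0 ≤ Real.log δ₀ - Real.log δ := by linarith
    positivity
  have hexp_t₁ : Real.exp (μ/3 * t₁ + 0) = δ₀/δ := by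
    have harg : μ/3 * t₁ + 0 = Real.log (δ₀/δ) := by
      rw [ht₁def]; field_simp; ring
    rw [harg, Real.exp_log (div_pos hδ₀pos hδpos)]
  have ht₁le : t₁ ≤ 3*α/μ * L := by
    rw [ht₁def, hlogq, hlogδ, hLe]
    have key : Real.log δ₀ - α * Real.log ε ≤ α * -Real.log ε := by linarith
    calc 3/μ * (Real.log δ₀ - α * Real.log ε) ≤ 3/μ * (α * -Real.log ε) :=
          mul_le_mul_of_nonneg_left key h3μ.le
      _ = 3*α/μ * -Real.log ε := by ring
  obtain ⟨T₂, hT₂def⟩ : ∃ x : ℝ, x = (a0 - δ₀ - (am + δ₁)) * (2/m) := ⟨_, rfl⟩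
  have hT₂0 : 0 ≤ T₂ := by
    rw [hT₂def]; exact mul_nonneg (by linarith) (by positivity)
  have hT₂le : T₂ ≤ 2*(a0 - am)/m * L := by
    have h1' : T₂ ≤ 2*(a0 - am)/m := by
      rw [hT₂def, show (a0 - δ₀ - (am + δ₁)) * (2/m) = 2*(a0 - δ₀ - (am + δ₁))/m from by
        ring]
      gcongr
      all_goals linarith
    have h2' : (0:ℝ) ≤ 2*(a0 - am)/m := div_nonneg (by linarith) hm.le
    nlinarith only [h1', hL1, mul_nonneg h2' (show (0:ℝ) ≤ L - 1 by linarith only [hL1])]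
  obtain ⟨t₂, ht₂def⟩ : ∃ x : ℝ, x = t₁ + T₂ := ⟨_, rfl⟩
  have ht₂0 : 0 ≤ t₂ := by rw [ht₂def]; linarith only [ht₁0, hT₂0]
  obtain ⟨T, hTdef⟩ : ∃ x : ℝ,
      x = (3*α/μ + 2*(a0 - am)/m + 5*κ/p + 2/p*Real.log (K + 2)) * L := ⟨_, rfl⟩
  rw [← hTdef]
  have hTt₂ : (5*κ/p + 2/p*Real.log (K + 2)) * L ≤ T - t₂ := by
    rw [hTdef, ht₂def]
    nlinarith only [ht₁le, hT₂le]
  have haux1 : 0 ≤ (5*κ/p + 2/p*Real.log (K + 2)) * L := by positivity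
  have ht₂T : t₂ ≤ T := by linarith only [hTt₂, haux1]
  have hT0 : 0 ≤ T := le_trans ht₂0 ht₂T
  -- membership of ξ
  have hξmem : ξ ∈ Set.Icc (-(2*C₀)) (2*C₀) :=
    ⟨hξl, by linarith only [hξu, hδpos, h2, hap2C]⟩
  have hg : ∀ τ, 0 ≤ τ → HasDerivAt (fun s => Y s ξ) (f (Y τ ξ)) τ :=
    fun τ h => hYode ξ hξmem τ h
  have hg0 : Y 0 ξ = ξ := hY0 ξ hξmem
  -- Stage 1 : escape from a0
  have S1 : ∀ τ ∈ Set.Icc 0 t₁, Y τ ξ ≤ a0 + (-δ) * Real.exp (μ/3 * τ + 0) := by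
    apply crossing_aux (gd := fun τ => f (Y τ ξ))
      (Bd := fun τ => μ/3 * (-δ) * Real.exp (μ/3 * τ + 0))
    · exact fun τ hτ => hg τ hτ.1
    · exact fun τ _ => hasDerivAt_bar (μ/3) 0 a0 (-δ) τ
    · rw [hg0]
      have he0 : μ/3 * 0 + 0 = (0:ℝ) := by ring
      rw [he0, Real.exp_zero]
      linarith only [hξu]
    · intro τ hτ heq
      have hEpos : 0 < Real.exp (μ/3 * τ + 0) := Real.exp_pos _
      have hE2 : Real.exp (μ/3 * τ + 0) < δ₀/δ := by
        rw [← hexp_t₁]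
        apply Real.exp_lt_exp.mpr
        have hmul := mul_lt_mul_of_pos_left hτ.2 (show (0:ℝ) < μ/3 by positivity)
        linarith only [hmul]
      have hδE : δ * Real.exp (μ/3 * τ + 0) < δ₀ := by
        have hh := (lt_div_iff₀ hδpos).mp hE2
        linarith only [hh]
      have hδEpos : 0 < δ * Real.exp (μ/3 * τ + 0) := mul_pos hδpos hEpos
      have hlow : a0 - δ₀ ≤ Y τ ξ := by rw [heq]; linarith only [hδE]
      have hup : Y τ ξ ≤ a0 := by rw [heq]; linarith only [hδEpos]
      have hfb := hF4 (Y τ ξ) hlow hup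
      have ha0Y : a0 - Y τ ξ = δ * Real.exp (μ/3 * τ + 0) := by rw [heq]; ring
      rw [ha0Y] at hfb
      nlinarith only [hfb, mul_pos hμ hδEpos]
  have hgt₁ : Y t₁ ξ ≤ a0 - δ₀ := by
    have h := S1 t₁ ⟨ht₁0, le_refl _⟩
    rw [hexp_t₁] at h
    have hc' : (-δ) * (δ₀/δ) = -δ₀ := by field_simp
    rw [hc'] at h
    linarith only [h]
  -- Stage 2 : transit
  have hmT : m/2 * T₂ = a0 - δ₀ - (am + δ₁) := by
    rw [hT₂def]; field_simp
  have S2 : ∀ τ ∈ Set.Icc t₁ t₂, Y τ ξ ≤ (a0 - δ₀ + m/2*t₁) + (-(m/2)) * τ := by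
    apply crossing_aux (gd := fun τ => f (Y τ ξ)) (Bd := fun _ => -(m/2))
    · exact fun τ hτ => hg τ (le_trans ht₁0 hτ.1)
    · exact fun τ _ => hasDerivAt_lin _ _ τ
    · linarith only [hgt₁]
    · intro τ hτ heq
      have hτ1 : t₁ ≤ τ := hτ.1
      have hτ2 : τ < t₂ := hτ.2
      have hub : Y τ ξ ≤ a0 - δ₀ := by
        rw [heq]
        have hmul := mul_le_mul_of_nonneg_left hτ1 (show (0:ℝ) ≤ m/2 by positivity)
        linarith only [hmul]
      have hlb : am + δ₁ ≤ Y τ ξ := by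
        rw [heq]
        have hmul : m/2 * (τ - t₁) < m/2 * T₂ := by
          apply mul_lt_mul_of_pos_left _ (by positivity)
          rw [ht₂def] at hτ2; linarith only [hτ2]
        nlinarith only [hmul, hmT]
      have hfb := hF5 (Y τ ξ) hlb hub
      linarith only [hfb, hm]
  have hgt₂ : Y t₂ ξ ≤ am + δ₁ := by
    have h := S2 t₂ ⟨by rw [ht₂def]; linarith only [hT₂0], le_refl _⟩
    rw [ht₂def] at h ⊢
    nlinarith only [h, hmT]
  -- Stage 3 : attraction to am from above
  have S3 : ∀ τ ∈ Set.Icc t₂ T, Y τ ξ ≤ am + δ₁ * Real.exp (-(p/3) * τ + p/3*t₂) := by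
    apply crossing_aux (gd := fun τ => f (Y τ ξ))
      (Bd := fun τ => -(p/3) * δ₁ * Real.exp (-(p/3) * τ + p/3*t₂))
    · exact fun τ hτ => hg τ (le_trans ht₂0 hτ.1)
    · exact fun τ _ => hasDerivAt_bar (-(p/3)) (p/3*t₂) am δ₁ τ
    · have he0 : -(p/3) * t₂ + p/3*t₂ = 0 := by ring
      rw [he0, Real.exp_zero, mul_one]
      exact hgt₂
    · intro τ hτ heq
      have hEpos : 0 < Real.exp (-(p/3) * τ + p/3*t₂) := Real.exp_pos _
      have hE1 : Real.exp (-(p/3) * τ + p/3*t₂) ≤ 1 := by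
        apply Real.exp_le_one_iff.mpr
        have hmul := mul_le_mul_of_nonneg_left hτ.1 (show (0:ℝ) ≤ p/3 by positivity)
        linarith only [hmul]
      have hδ₁E : 0 < δ₁ * Real.exp (-(p/3) * τ + p/3*t₂) := mul_pos hδ₁pos hEpos
      have hlb : am ≤ Y τ ξ := by rw [heq]; linarith only [hδ₁E]
      have hub : Y τ ξ ≤ am + δ₁ := by
        rw [heq]
        nlinarith only [mul_nonneg hδ₁pos.le
          (show (0:ℝ) ≤ 1 - Real.exp (-(p/3) * τ + p/3*t₂) by linarith only [hE1])]
      have hfb := hF3 (Y τ ξ) hlb hub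
      have hYam : Y τ ξ - am = δ₁ * Real.exp (-(p/3) * τ + p/3*t₂) := by rw [heq]; ring
      rw [hYam] at hfb
      nlinarith only [hfb, mul_pos hp hδ₁E]
  -- Lower barrier on [0, T]
  have S4 : ∀ τ ∈ Set.Icc 0 T, -(Y τ ξ) ≤ -am + (K+1) * Real.exp (-(p/2) * τ + 0) := by
    apply crossing_aux (gd := fun τ => -(f (Y τ ξ)))
      (Bd := fun τ => -(p/2) * (K+1) * Real.exp (-(p/2) * τ + 0))
    · exact fun τ hτ => (hg τ hτ.1).neg
    · exact fun τ _ => hasDerivAt_bar (-(p/2)) 0 (-am) (K+1) τ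
    · rw [hg0]
      have he0 : -(p/2) * 0 + 0 = (0:ℝ) := by ring
      rw [he0, Real.exp_zero, mul_one, hKdef]
      linarith only [hξl]
    · intro τ hτ heq
      have hEpos : 0 < Real.exp (-(p/2) * τ + 0) := Real.exp_pos _
      have hKE : 0 < (K+1) * Real.exp (-(p/2) * τ + 0) :=
        mul_pos (by linarith only [hK0]) hEpos
      have hYval : Y τ ξ = am - (K+1) * Real.exp (-(p/2) * τ + 0) := by
        linarith only [heq]
      have hYle : Y τ ξ ≤ am := by linarith only [hYval, hKE]
      have hfb := hsubb (Y τ ξ) hYle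
      rw [hYval] at hfb ⊢
      nlinarith only [hfb, mul_pos hp hKE, hKE, hp]
  -- final time estimates
  have hkey3 : κ * L ≤ p/3 * (T - t₂) := by
    have hmul := mul_le_mul_of_nonneg_left hTt₂ (show (0:ℝ) ≤ p/3 by positivity)
    have heqL : p/3 * ((5*κ/p + 2/p*Real.log (K + 2)) * L)
        = 5*κ/3*L + 2/3*Real.log (K + 2)*L := by
      field_simp
    rw [heqL] at hmul
    linarith only [hmul, mul_nonneg hκ.le hLpos.le, mul_nonneg hlogK2.le hLpos.le]
  have hkey2 : κ * L + Real.log (K+1) ≤ p/2 * T := by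
    have hTge : (5*κ/p + 2/p*Real.log (K + 2)) * L ≤ T := by linarith only [hTt₂, ht₂0]
    have hmul := mul_le_mul_of_nonneg_left hTge (show (0:ℝ) ≤ p/2 by positivity)
    have heqL : p/2 * ((5*κ/p + 2/p*Real.log (K + 2)) * L)
        = 5*κ/2*L + Real.log (K + 2)*L := by
      field_simp
    rw [heqL] at hmul
    linarith only [hmul, mul_nonneg hκ.le hLpos.le, hlogK12, hlogK1,
      mul_nonneg hlogK2.le (show (0:ℝ) ≤ L - 1 by linarith only [hL1])]
  have hrpow : ε ^ κ = Real.exp (κ * Real.log ε) := by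
    rw [Real.rpow_def_of_pos hε0, mul_comm]
  have hfinal_up : Y T ξ - am ≤ ε ^ κ := by
    have h := S3 T ⟨ht₂T, le_refl _⟩
    have hexp : Real.exp (-(p/3) * T + p/3*t₂) ≤ Real.exp (κ * Real.log ε) := by
      apply Real.exp_le_exp.mpr
      rw [hLe] at hkey3
      linarith only [hkey3]
    have hEpos : 0 < Real.exp (-(p/3) * T + p/3*t₂) := Real.exp_pos _
    rw [hrpow]
    nlinarith only [h, hexp, hδ₁1, hEpos,
      mul_nonneg (show (0:ℝ) ≤ 1 - δ₁ by linarith only [hδ₁1]) hEpos.le]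
  have hfinal_lo : am - Y T ξ ≤ ε ^ κ := by
    have h := S4 T ⟨hT0, le_refl _⟩
    have hKexp : (K+1) * Real.exp (-(p/2)*T + 0)
        = Real.exp (Real.log (K+1) + (-(p/2)*T + 0)) := by
      rw [Real.exp_add (Real.log (K+1)) (-(p/2)*T + 0),
        Real.exp_log (show (0:ℝ) < K+1 by linarith only [hK0])]
    have hexp : Real.exp (Real.log (K+1) + (-(p/2)*T + 0)) ≤ Real.exp (κ * Real.log ε) := by
      apply Real.exp_le_exp.mpr
      rw [hLe] at hkey2
      linarith only [hkey2]
    rw [hKexp] at h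
    rw [hrpow]
    linarith only [h, hexp]
  rw [abs_le]
  exact ⟨by linarith only [hfinal_lo], by linarith only [hfinal_up]⟩
end
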